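/- arXiv:math/0310488 — 2 statements merged into one kernel-verified Lean document; each statement's English description precedes it below -/
import Mathlib

section
/- For every real q ≥ 3, one has β_c(q)/β_c(q-1) < q, where β_c(x) = 2(x-1)/(x-2)·log(x-1) for x > 2 and β_c(2) = 4. -/
/-- Mean-field Potts critical inverse temperature, extended continuously by `β_c(2) = 4`. -/
noncomputable def betac (x : ℝ) : ℝ :=
  if x = 2 then 4 else 2 * (x - 1) / (x - 2) * Real.log (x - 1)

/-- For every real `q ≥ 3`, `β_c(q)/β_c(q-1) < q`. -/
theorem betac_ratio_lt (q : ℝ) (hq : 3 ≤ q) : betac q / betac (q - 1) < q := by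
  rcases eq_or_lt_of_le hq with h3 | h3
  · -- q = 3
    rw [← h3]
    have : betac 3 = 4 * Real.log 2 := by
      rw [betac, if_neg (by norm_num)]; norm_num
    have h2 : betac (3 - 1 : ℝ) = 4 := by norm_num [betac]
    rw [this, h2]
    have := Real.log_two_lt_d9
    rw [div_lt_iff₀ (by norm_num : (0:ℝ) < 4)]
    nlinarith
  · -- q > 3
    have hq2 : q - 2 > 1 := by linarith
    have hq3 : q - 3 > 0 := by linarith
    have hne : q ≠ 2 := by linarith
    have hne1 : q - 1 ≠ 2 := by intro h; linarith
    rw [show betac q = 2 * (q - 1) / (q - 2) * Real.log (q - 1) from by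
        rw [betac, if_neg hne],
      show betac (q - 1) = 2 * (q - 2) / (q - 3) * Real.log (q - 2) from by
        rw [betac, if_neg hne1]; ring_nf]
    have hb : Real.log (q - 2) > 0 := Real.log_pos hq2
    have ha : Real.log (q - 1) > 0 := Real.log_pos (by linarith)
    have hDpos : 0 < 2 * (q - 2) / (q - 3) * Real.log (q - 2) := by positivity
    rw [div_lt_iff₀ hDpos]
    -- key inequalities
    have h1 : Real.log (q - 1) ≤ q - 2 := by
      have := Real.log_le_sub_one_of_pos (show (0:ℝ) < q - 1 by linarith)
      linarith
    have h2 : q - 3 ≤ (q - 2) * Real.log (q - 2) := by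
      have := Real.log_le_sub_one_of_pos (show (0:ℝ) < (q - 2)⁻¹ by positivity)
      rw [Real.log_inv] at this
      have h' : -Real.log (q - 2) ≤ (q - 2)⁻¹ - 1 := this
      have hinv : (q - 2) * (q - 2)⁻¹ = 1 := mul_inv_cancel₀ (by linarith)
      nlinarith
    rw [div_mul_eq_mul_div, div_mul_eq_mul_div, mul_div_assoc', div_lt_div_iff₀ (by linarith) hq3]
    nlinarith [mul_le_mul_of_nonneg_left h1 (show (0:ℝ) ≤ 2 * (q - 1) * (q - 3) by nlinarith),
      mul_le_mul_of_nonneg_left h2 (show (0:ℝ) ≤ 2 * q * (q - 2) by nlinarith)]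
end

section
/- Let q > r ≥ 2 be integers, β ≥ β_c(q), and let u = u(q,β) be the largest solution of the mean-field equation u = (1-e^{-βu})/(1+(q-1)e^{-βu}), which is increasing in β and satisfies u(q,β_c(q)) = (q-2)/(q-1). Then the typical fuzzy density n⁻ = (1-u)r/q satisfies n⁻ < β_c(r)/β, assuming the auxiliary facts: β_c(x)/x is decreasing, β_c(x) < x for x > 2, and β_c(q)/β_c(q-1) < q. -/
lemma log_lower {t : ℝ} (ht : 1 ≤ t) : 2 - 4/(t+1) ≤ Real.log t := by
  set f : ℝ → ℝ := fun t => Real.log t + 4*(t+1)⁻¹ with hf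
  have hmono : MonotoneOn f (Set.Ici (1:ℝ)) := by
    apply monotoneOn_of_deriv_nonneg (convex_Ici 1)
    · apply ContinuousOn.add
      · exact Real.continuousOn_log.mono (by intro x hx; simp at hx ⊢; linarith)
      · exact (continuousOn_const.mul (ContinuousOn.inv₀ (by fun_prop)
          (by intro x hx; simp at hx; intro h; linarith)))
    · intro x hx
      simp only [interior_Ici, Set.mem_Ioi] at hx
      have hx0 : (0:ℝ) < x := by linarith
      have h1 : x + 1 ≠ 0 := by positivity
      exact ((Real.hasDerivAt_log hx0.ne').add
        (((hasDerivAt_id x).add_const 1).inv h1 |>.const_mul 4)).differentiableAt.differentiableWithinAt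
    · intro x hx
      simp only [interior_Ici, Set.mem_Ioi] at hx
      have hx0 : (0:ℝ) < x := by linarith
      have h1 : x + 1 ≠ 0 := by positivity
      have hd : HasDerivAt f (x⁻¹ + 4 * (-1 / (x+1)^2)) x :=
        (Real.hasDerivAt_log hx0.ne').add
          ((((hasDerivAt_id x).add_const 1).inv h1).const_mul 4 |>.congr_deriv (by simp [id]))
      rw [hd.deriv]
      have : x⁻¹ + 4 * (-1/(x+1)^2) = (x-1)^2 / (x*(x+1)^2) := by
        field_simp
        ring
      rw [this]
      positivity
  have h1 : f 1 ≤ f t := hmono (by simp) (by simpa using ht) ht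
  have ht1 : t + 1 ≠ 0 := by positivity
  simp only [hf, Real.log_one] at h1
  have h2 : (4:ℝ)/(t+1) = 4*(t+1)⁻¹ := by rw [div_eq_mul_inv]
  rw [h2]
  norm_num at h1
  linarith



lemma key_ineq {c x : ℝ} (hc : 1 ≤ c) (hx0 : 0 < x) (hx1 : x < 1) :
    (c+1)*x/(1+c*x) ≤ Real.log (1+c*x) - Real.log (1-x) := by
  have h1 : (0:ℝ) < 1 - x := by linarith
  have h2 : (0:ℝ) < 1 + c*x := by nlinarith
  set t : ℝ := (1+c*x)/(1-x) with htdef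
  have ht1 : 1 ≤ t := by
    rw [htdef, le_div_iff₀ h1]
    nlinarith
  have hlog : Real.log t = Real.log (1+c*x) - Real.log (1-x) :=
    Real.log_div h2.ne' h1.ne'
  have htm : t * (1-x) = 1 + c*x := by
    rw [htdef]; field_simp
  have ht0 : (0:ℝ) < t + 1 := by linarith
  have hgoal : (c+1)*x/(1+c*x) ≤ 2 - 4/(t+1) := by
    have e : 2 - 4/(t+1) = 2*(t-1)/(t+1) := by
      field_simp
      ring
    rw [e, div_le_div_iff₀ h2 ht0]
    nlinarith [sq_nonneg ((c+1)*x), htm, mul_pos hx0 h1]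
  calc (c+1)*x/(1+c*x) ≤ 2 - 4/(t+1) := hgoal
    _ ≤ Real.log t := log_lower ht1
    _ = _ := hlog

lemma g_anti {c : ℝ} (hc : 1 ≤ c) :
    AntitoneOn (fun x : ℝ => (1/x - 1) * (Real.log (1+c*x) - Real.log (1-x)))
      (Set.Ioo (0:ℝ) 1) := by
  set g : ℝ → ℝ := fun x => (1/x - 1) * (Real.log (1+c*x) - Real.log (1-x)) with hg
  have hderiv : ∀ x ∈ Set.Ioo (0:ℝ) 1, HasDerivAt g
      ((-(1/x^2)) * (Real.log (1+c*x) - Real.log (1-x))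
        + (1/x - 1) * (c/(1+c*x) + 1/(1-x))) x := by
    intro x hx
    obtain ⟨hx0, hx1⟩ := hx
    have h1 : (0:ℝ) < 1 - x := by linarith
    have h2 : (0:ℝ) < 1 + c*x := by nlinarith
    have d1 : HasDerivAt (fun x : ℝ => 1/x - 1) (-(1/x^2)) x := by
      simpa [one_div] using ((hasDerivAt_inv hx0.ne').sub_const 1)
    have d2 : HasDerivAt (fun x : ℝ => 1 + c*x) c x := by
      simpa using ((hasDerivAt_id x).const_mul c).const_add 1
    have d3 : HasDerivAt (fun x : ℝ => 1 - x) (-1) x := by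
      simpa using (hasDerivAt_id x).const_sub 1
    have d4 : HasDerivAt (fun x : ℝ => Real.log (1+c*x) - Real.log (1-x))
        (c/(1+c*x) + 1/(1-x)) x := by
      have := (d2.log h2.ne').sub (d3.log h1.ne')
      exact this.congr_deriv (by ring)
    exact d1.mul d4
  have hd2 : ∀ x ∈ Set.Ioo (0:ℝ) 1, deriv g x ≤ 0 := by
    intro x hx
    obtain ⟨hx0, hx1⟩ := hx
    have h1 : (0:ℝ) < 1 - x := by linarith
    have h2 : (0:ℝ) < 1 + c*x := by nlinarith
    rw [(hderiv x ⟨hx0, hx1⟩).deriv]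
    have e1 : (1/x - 1) * (c/(1+c*x) + 1/(1-x)) = (c+1)/(x*(1+c*x)) := by
      field_simp
      ring
    have e2 : (c+1)/(x*(1+c*x)) = ((c+1)*x/(1+c*x)) / x^2 := by
      field_simp
    have hk := key_ineq hc hx0 hx1
    have hx2 : (0:ℝ) < x^2 := by positivity
    rw [e1, e2]
    have : ((c+1)*x/(1+c*x)) / x^2 ≤ (Real.log (1+c*x) - Real.log (1-x)) / x^2 := by
      gcongr
    have e3 : -(1/x^2) * (Real.log (1+c*x) - Real.log (1-x))
        = -((Real.log (1+c*x) - Real.log (1-x))/x^2) := by ring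
    linarith
  apply antitoneOn_of_deriv_nonpos (convex_Ioo 0 1)
  · exact fun x hx => ((hderiv x hx).differentiableAt.continuousAt.continuousWithinAt)
  · rw [interior_Ioo]
    exact fun x hx => (hderiv x hx).differentiableAt.differentiableWithinAt
  · rw [interior_Ioo]; exact hd2

lemma betac_pos {x : ℝ} (hx : 2 ≤ x) : 0 < betac x := by
  unfold betac
  rcases eq_or_lt_of_le hx with h | h
  · simp [← h]
  · rw [if_neg (by linarith)]
    have h1 : (0:ℝ) < x - 2 := by linarith
    have h2 : (0:ℝ) < Real.log (x-1) := Real.log_pos (by linarith)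
    exact mul_pos (div_pos (by linarith) h1) h2



/-- Left inequality of Proposition (ii): for integers `q > r ≥ 2` and `β ≥ β_c(q)`,
the typical fuzzy density `n⁻ = (1-u)r/q` of a non-predominant fuzzy class satisfies
`n⁻ < β_c(r)/β`, where `u = u(q,β)` is the largest solution of the mean-field equation,
assumed increasing in `β` with `u(q, β_c(q)) = (q-2)/(q-1)`, and assuming the auxiliary
facts that `β_c(x)/x` is strictly decreasing on `[2,∞)`, that `β_c(x) < x` for `x > 2`,
and that `β_c(q)/β_c(q-1) < q`. -/
theorem nminus_lt_threshold (q r : ℕ) (hr : 2 ≤ r) (hrq : r < q)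
    (u : ℝ → ℝ)
    (hmeanfield : ∀ β' : ℝ, betac q ≤ β' →
      u β' = (1 - Real.exp (-β' * u β'))
              / (1 + ((q : ℝ) - 1) * Real.exp (-β' * u β')))
    (hmaximal : ∀ β' : ℝ, betac q ≤ β' → ∀ v : ℝ,
      v = (1 - Real.exp (-β' * v)) / (1 + ((q : ℝ) - 1) * Real.exp (-β' * v)) → v ≤ u β')
    (hmono : MonotoneOn u (Set.Ici (betac q)))
    (hcrit : u (betac q) = ((q : ℝ) - 2) / ((q : ℝ) - 1))
    (haux1 : StrictAntiOn (fun x : ℝ => betac x / x) (Set.Ici (2 : ℝ)))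
    (haux2 : ∀ x : ℝ, 2 < x → betac x < x)
    (haux3 : betac q / betac ((q : ℝ) - 1) < (q : ℝ))
    (β : ℝ) (hβ : betac q ≤ β) :
    (1 - u β) * (r : ℝ) / (q : ℝ) < betac r / β := by
  have hq3 : 3 ≤ q := by omega
  have hq3' : (3:ℝ) ≤ (q:ℝ) := by exact_mod_cast hq3
  have hr2 : (2:ℝ) ≤ (r:ℝ) := by exact_mod_cast hr
  have hrq' : (r:ℝ) ≤ (q:ℝ) - 1 := by
    have : (r:ℝ) + 1 ≤ q := by exact_mod_cast hrq
    linarith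
  set c : ℝ := (q:ℝ) - 1 with hcdef
  have hc1 : (1:ℝ) ≤ c := by simp [hcdef]; linarith
  have hc2 : (2:ℝ) ≤ c := by simp [hcdef]; linarith
  -- u₀
  set u₀ : ℝ := ((q:ℝ) - 2) / ((q:ℝ) - 1) with hu0def
  have hu0pos : 0 < u₀ := by
    apply div_pos <;> linarith
  have hu0lt1 : u₀ < 1 := by
    rw [hu0def, div_lt_one (by linarith)]
    linarith
  -- u β bounds
  have hβmem : β ∈ Set.Ici (betac q) := hβ
  have hcmem : betac (q:ℝ) ∈ Set.Ici (betac q) := Set.self_mem_Ici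
  have hulb : u₀ ≤ u β := by
    have := hmono hcmem hβmem hβ
    rwa [hcrit] at this
  have hupos : 0 < u β := lt_of_lt_of_le hu0pos hulb
  set e : ℝ := Real.exp (-β * u β) with hedef
  have hepos : 0 < e := Real.exp_pos _
  have heq := hmeanfield β hβ
  rw [← hedef] at heq
  have hden : (0:ℝ) < 1 + c * e := by nlinarith
  have hult1 : u β < 1 := by
    rw [heq, div_lt_one hden]
    nlinarith
  have h1u : (0:ℝ) < 1 - u β := by linarith
  have h1cu : (0:ℝ) < 1 + c * u β := by nlinarith
  -- solve for e
  have hesolve : e = (1 - u β) / (1 + c * u β) := by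
    rw [eq_div_iff h1cu.ne']
    have h : u β * (1 + c * e) = 1 - e := by
      rw [heq]; field_simp
    linear_combination h
  -- β * u β = log(1+c u) - log(1-u)
  have hβu : β * u β = Real.log (1 + c * u β) - Real.log (1 - u β) := by
    have h := Real.log_exp (-β * u β)
    rw [← hedef, hesolve, Real.log_div h1u.ne' h1cu.ne'] at h
    linarith
  -- β(1-u) = g(u β)
  set g : ℝ → ℝ := fun x => (1/x - 1) * (Real.log (1+c*x) - Real.log (1-x)) with hgdef
  have hgu : g (u β) = β * (1 - u β) := by
    simp only [hgdef]
    rw [← hβu]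
    field_simp
  -- g(u₀) = betac q / (q-1)
  have hq2ne : ((q:ℝ)) ≠ 2 := by linarith
  have hbetacq : betac q = 2 * ((q:ℝ) - 1) / ((q:ℝ) - 2) * Real.log ((q:ℝ) - 1) := by
    rw [betac, if_neg hq2ne]
  have hgu0 : g u₀ = betac q / ((q:ℝ) - 1) := by
    simp only [hgdef]
    have hne1 : (q:ℝ) - 1 ≠ 0 := by linarith
    have hne2 : (q:ℝ) - 2 ≠ 0 := by linarith
    have e1 : 1 + c * u₀ = (q:ℝ) - 1 := by
      rw [hu0def, hcdef]
      field_simp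
      ring
    have e2 : 1 - u₀ = 1 / ((q:ℝ) - 1) := by
      rw [hu0def]
      field_simp
      ring
    have e3 : 1 / u₀ - 1 = 1 / ((q:ℝ) - 2) := by
      rw [hu0def, one_div_div]
      field_simp
      ring
    have e4 : Real.log (1/((q:ℝ)-1)) = -Real.log ((q:ℝ)-1) := by
      rw [one_div, Real.log_inv]
    rw [e1, e2, e3, e4, hbetacq]
    field_simp
    ring
  -- antitone
  have hganti := g_anti hc1
  have hmem1 : u₀ ∈ Set.Ioo (0:ℝ) 1 := ⟨hu0pos, hu0lt1⟩
  have hmem2 : u β ∈ Set.Ioo (0:ℝ) 1 := ⟨hupos, hult1⟩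
  have hgle : g (u β) ≤ g u₀ := hganti hmem1 hmem2 hulb
  have hkey : β * (1 - u β) ≤ betac q / ((q:ℝ) - 1) := by
    rw [← hgu, ← hgu0]; exact hgle
  -- positivity
  have hbq_pos : 0 < betac (q:ℝ) := betac_pos (by linarith)
  have hβpos : 0 < β := lt_of_lt_of_le hbq_pos hβ
  have hqpos : (0:ℝ) < (q:ℝ) := by linarith
  have hbq1_pos : 0 < betac ((q:ℝ) - 1) := betac_pos (by linarith)
  have hbr_pos : 0 < betac (r:ℝ) := betac_pos hr2
  -- haux3
  have h3 : betac q < (q:ℝ) * betac ((q:ℝ) - 1) := by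
    rw [div_lt_iff₀ hbq1_pos] at haux3
    linarith
  -- haux1
  have hm1 : (r:ℝ) ∈ Set.Ici (2:ℝ) := hr2
  have hm2 : c ∈ Set.Ici (2:ℝ) := hc2
  have h4 : betac c / c ≤ betac (r:ℝ) / (r:ℝ) := by
    rcases eq_or_lt_of_le hrq' with h | h
    · rw [hcdef] at h ⊢
      rw [← h]
    · exact (haux1 hm1 hm2 h).le
  have hq1pos : (0:ℝ) < (q:ℝ) - 1 := by linarith
  have hrpos : (0:ℝ) < (r:ℝ) := by linarith
  -- final
  rw [div_lt_div_iff₀ hqpos hβpos]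
  have s1 : betac q * (r:ℝ) / ((q:ℝ)-1) < ((q:ℝ) * betac c) * (r:ℝ) / ((q:ℝ)-1) := by
    exact (div_lt_div_iff_of_pos_right hq1pos).mpr (mul_lt_mul_of_pos_right h3 hrpos)
  have s2 : ((q:ℝ) * betac c) * (r:ℝ) / ((q:ℝ)-1) ≤ betac (r:ℝ) * (q:ℝ) := by
    have e5 : ((q:ℝ) * betac c) * (r:ℝ) / ((q:ℝ)-1) = ((q:ℝ)*(r:ℝ)) * (betac c / c) := by
      rw [hcdef]
      field_simp
    have e6 : betac (r:ℝ) * (q:ℝ) = ((q:ℝ)*(r:ℝ)) * (betac (r:ℝ) / (r:ℝ)) := by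
      field_simp
    rw [e5, e6]
    exact mul_le_mul_of_nonneg_left h4 (by positivity)
  have hmain : (1 - u β) * (r:ℝ) * β ≤ betac q * (r:ℝ) / ((q:ℝ)-1) := by
    have h := mul_le_mul_of_nonneg_right hkey hrpos.le
    calc (1 - u β) * (r:ℝ) * β = (β * (1 - u β)) * (r:ℝ) := by ring
      _ ≤ (betac q / ((q:ℝ)-1)) * (r:ℝ) := h
      _ = betac q * (r:ℝ) / ((q:ℝ)-1) := by ring
  exact hmain.trans_lt (s1.trans_le s2)
end
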